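/- Let (Ω, F, P) be a probability space, ξ* ∈ L² with ξ* ≥ 0 a.s., and q ∈ L², λ₁, λ₂ ∈ ℝ. If E[(2ξ* + λ₁q + λ₂)(ξ − ξ*)] ≥ 0 for every ξ ∈ L² with ξ ≥ 0 a.s., then 2ξ* + λ₁q + λ₂ ≥ 0 a.s. on {ξ* = 0} and 2ξ* + λ₁q + λ₂ = 0 a.s. on {ξ* > 0}. -/

import Mathlib

open MeasureTheory

/-- Converse: if `E[(2ξ* + lam₁q + lam₂)(ξ − ξ*)] ≥ 0` for every nonnegative `ξ ∈ L²`, then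
`2ξ* + lam₁q + lam₂ ≥ 0` a.s. on `{ξ* = 0}` and `= 0` a.s. on `{ξ* > 0}`. -/
theorem pointwise_conditions_of_variational_inequality
    {Ω : Type*} [MeasurableSpace Ω] (μ : Measure Ω) [IsProbabilityMeasure μ]
    (ξstar q : Ω → ℝ) (lam₁ lam₂ : ℝ)
    (hξstar : MemLp ξstar 2 μ) (hq : MemLp q 2 μ)
    (hξstar_nonneg : ∀ᵐ ω ∂μ, 0 ≤ ξstar ω)
    (hvar : ∀ ξ : Ω → ℝ, MemLp ξ 2 μ → (∀ᵐ ω ∂μ, 0 ≤ ξ ω) →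
      0 ≤ ∫ ω, (2 * ξstar ω + lam₁ * q ω + lam₂) * (ξ ω - ξstar ω) ∂μ) :
    (∀ᵐ ω ∂μ, ξstar ω = 0 → 0 ≤ 2 * ξstar ω + lam₁ * q ω + lam₂) ∧
    (∀ᵐ ω ∂μ, 0 < ξstar ω → 2 * ξstar ω + lam₁ * q ω + lam₂ = 0) := by
  set g : Ω → ℝ := fun ω => 2 * ξstar ω + lam₁ * q ω + lam₂ with hgdef
  have hg2 : MemLp g 2 μ :=
    ((hξstar.const_mul 2).add (hq.const_mul lam₁)).add (memLp_const lam₂)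
  have hgint : Integrable g μ := hg2.integrable (by norm_num)
  -- Step A : g ≥ 0 a.e.
  have hge : 0 ≤ᵐ[μ] g := by
    apply ae_nonneg_of_forall_setIntegral_nonneg hgint
    intro s hs _
    have hξmem : MemLp (fun ω => ξstar ω + s.indicator (fun _ => (1:ℝ)) ω) 2 μ :=
      hξstar.add (memLp_indicator_const 2 hs 1 (Or.inr (measure_ne_top μ s)))
    have hpos : ∀ᵐ ω ∂μ, 0 ≤ ξstar ω + s.indicator (fun _ => (1:ℝ)) ω :=
      hξstar_nonneg.mono fun ω h =>
        add_nonneg h (Set.indicator_nonneg (fun _ _ => zero_le_one) ω)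
    have h := hvar _ hξmem hpos
    have heq : ∀ ω, g ω * ((ξstar ω + s.indicator (fun _ => (1:ℝ)) ω) - ξstar ω)
        = s.indicator g ω := by
      intro ω
      by_cases hω : ω ∈ s <;> simp [hω]
    calc (0:ℝ) ≤ _ := h
      _ = ∫ ω, s.indicator g ω ∂μ := by
          apply integral_congr_ae
          filter_upwards with ω using heq ω
      _ = ∫ x in s, g x ∂μ := integral_indicator hs
  -- Step B : ∫ g ξ* ≤ 0, hence g ξ* = 0 a.e.
  have hintmul : Integrable (fun ω => g ω * ξstar ω) μ := by
    have hmem : MemLp (g • ξstar) 1 μ :=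
      hξstar.smul hg2
    have := memLp_one_iff_integrable.mp hmem
    exact this
  have hmul_nonneg : 0 ≤ᵐ[μ] fun ω => g ω * ξstar ω := by
    filter_upwards [hge, hξstar_nonneg] with ω h1 h2 using mul_nonneg h1 h2
  have h0 := hvar (fun _ => 0) (memLp_const 0)
    (Filter.Eventually.of_forall fun _ => le_refl 0)
  have hle : ∫ ω, g ω * ξstar ω ∂μ ≤ 0 := by
    have : (0:ℝ) ≤ ∫ ω, g ω * ((0:ℝ) - ξstar ω) ∂μ := h0
    rw [show (fun ω => g ω * ((0:ℝ) - ξstar ω)) = fun ω => -(g ω * ξstar ω) by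
      funext ω; ring, integral_neg] at this
    linarith
  have hzero : ∫ ω, g ω * ξstar ω ∂μ = 0 :=
    le_antisymm hle (integral_nonneg_of_ae hmul_nonneg)
  have hmulzero : (fun ω => g ω * ξstar ω) =ᵐ[μ] 0 :=
    (integral_eq_zero_iff_of_nonneg_ae hmul_nonneg hintmul).mp hzero
  constructor
  · filter_upwards [hge] with ω h _ using h
  · filter_upwards [hmulzero] with ω h hpos
    have : g ω * ξstar ω = 0 := h
    rcases mul_eq_zero.mp this with h' | h'
    · exact h'
    · exact absurd h' (ne_of_gt hpos)
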